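/- arXiv:1505.03547 — 3 statements merged into one kernel-verified Lean document; each statement's English description precedes it below -/
import Mathlib

section
/- Let A be an Artin algebra of infinite representation type, and let M ∈ P_∞ ∩ I_∞ be an indecomposable module that is neither postprojective nor preinjective. Let S be a simple summand of the socle of M with inclusion g : S → M. Then the composite θ_S = ι_S ∘ π_S factors as h ∘ (g ∘ π_S) for some h : M → I_S, and consequently θ_S ∈ (rad_A^∞)². -/
open CategoryTheory

variable {A : Type} [Ring A]

def Indec (X : ModuleCat.{0} A) : Prop :=
  (¬ Subsingleton X) ∧ ∀ e : X ⟶ X, e ≫ e = e → e = 0 ∨ e = 𝟙 X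

def Summand (D M : ModuleCat.{0} A) : Prop :=
  ∃ (i : D ⟶ M) (r : M ⟶ D), i ≫ r = 𝟙 D

inductive InAdd (C : Set (ModuleCat.{0} A)) : ModuleCat.{0} A → Prop
  | base : ∀ {M}, M ∈ C → InAdd C M
  | prod : ∀ {M N : ModuleCat.{0} A}, InAdd C M → InAdd C N →
      InAdd C (ModuleCat.of A (M × N))
  | summand : ∀ {D M}, InAdd C M → Summand D M → InAdd C D

def relRad (C : Set (ModuleCat.{0} A)) (M N : ModuleCat.{0} A) : Set (M ⟶ N) :=
  {f | ∀ X : ModuleCat.{0} A, InAdd C X → Indec X →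
    ∀ (g : X ⟶ M) (h : N ⟶ X), ¬ IsIso (g ≫ f ≫ h)}

def radPow (C : Set (ModuleCat.{0} A)) : ℕ → ∀ M N : ModuleCat.{0} A, AddSubgroup (M ⟶ N)
  | 0, _, _ => ⊤
  | m+1, M, N => AddSubgroup.closure
      {f | ∃ (L : ModuleCat.{0} A) (g : M ⟶ L) (h : L ⟶ N),
        g ∈ radPow C m M L ∧ h ∈ relRad C L N ∧ f = g ≫ h}

def radInf (C : Set (ModuleCat.{0} A)) (M N : ModuleCat.{0} A) : AddSubgroup (M ⟶ N) :=
  ⨅ n : ℕ, radPow C (n+1) M N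

def SplitProjIn (C : Set (ModuleCat.{0} A)) (N : ModuleCat.{0} A) : Prop :=
  ∀ M : ModuleCat.{0} A, InAdd C M → ∀ f : M ⟶ N, Epi f → ∃ s : N ⟶ M, s ≫ f = 𝟙 N

def SplitInjIn (C : Set (ModuleCat.{0} A)) (N : ModuleCat.{0} A) : Prop :=
  ∀ M : ModuleCat.{0} A, InAdd C M → ∀ f : N ⟶ M, Mono f → ∃ r : M ⟶ N, f ≫ r = 𝟙 N

def P0set (C : Set (ModuleCat.{0} A)) : Set (ModuleCat.{0} A) :=
  {N | N ∈ C ∧ Indec N ∧ SplitProjIn C N}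

def I0set (C : Set (ModuleCat.{0} A)) : Set (ModuleCat.{0} A) :=
  {N | N ∈ C ∧ Indec N ∧ SplitInjIn C N}

def pRest (C : Set (ModuleCat.{0} A)) : ℕ → Set (ModuleCat.{0} A)
  | 0 => C
  | k+1 => {M | M ∈ pRest C k ∧ ∀ D ∈ P0set (pRest C k), ¬ Summand D M}

def iRest (C : Set (ModuleCat.{0} A)) : ℕ → Set (ModuleCat.{0} A)
  | 0 => C
  | k+1 => {M | M ∈ iRest C k ∧ ∀ D ∈ I0set (iRest C k), ¬ Summand D M}

def Ppart (C : Set (ModuleCat.{0} A)) (k : ℕ) : Set (ModuleCat.{0} A) := P0set (pRest C k)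

def Ipart (C : Set (ModuleCat.{0} A)) (k : ℕ) : Set (ModuleCat.{0} A) := I0set (iRest C k)

def Pinf (C : Set (ModuleCat.{0} A)) : Set (ModuleCat.{0} A) :=
  {M | M ∈ C ∧ Indec M ∧ ∀ k, M ∉ Ppart C k}

def Iinf (C : Set (ModuleCat.{0} A)) : Set (ModuleCat.{0} A) :=
  {M | M ∈ C ∧ Indec M ∧ ∀ k, M ∉ Ipart C k}

def IsCover (D C : Set (ModuleCat.{0} A)) : Prop :=
  ∀ X ∈ C, ∃ Y : ModuleCat.{0} A, InAdd D Y ∧ ∃ f : Y ⟶ X, Epi f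

def IsCocover (D C : Set (ModuleCat.{0} A)) : Prop :=
  ∀ X ∈ C, ∃ Y : ModuleCat.{0} A, InAdd D Y ∧ ∃ f : X ⟶ Y, Mono f

def Resolving (C : Set (ModuleCat.{0} A)) : Prop :=
  (∀ P : ModuleCat.{0} A, Module.Finite A P → Projective P → Indec P → P ∈ C) ∧
  (∀ (X Y Z : ModuleCat.{0} A) (f : X ⟶ Y) (g : Y ⟶ Z), Mono f → Epi g →
      Function.Exact f g → X ∈ C → Z ∈ C → Y ∈ C) ∧
  (∀ (X Y Z : ModuleCat.{0} A) (f : X ⟶ Y) (g : Y ⟶ Z), Mono f → Epi g →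
      Function.Exact f g → Y ∈ C → Z ∈ C → X ∈ C)

def Coresolving (C : Set (ModuleCat.{0} A)) : Prop :=
  (∀ I : ModuleCat.{0} A, Module.Finite A I → Injective I → Indec I → I ∈ C) ∧
  (∀ (X Y Z : ModuleCat.{0} A) (f : X ⟶ Y) (g : Y ⟶ Z), Mono f → Epi g →
      Function.Exact f g → X ∈ C → Z ∈ C → Y ∈ C) ∧
  (∀ (X Y Z : ModuleCat.{0} A) (f : X ⟶ Y) (g : Y ⟶ Z), Mono f → Epi g →
      Function.Exact f g → X ∈ C → Y ∈ C → Z ∈ C)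

def CovariantlyFinite (C : Set (ModuleCat.{0} A)) : Prop :=
  ∀ D : ModuleCat.{0} A, Module.Finite A D → ∃ C' : ModuleCat.{0} A, InAdd C C' ∧
    ∃ f : D ⟶ C', ∀ X ∈ C, ∀ g : D ⟶ X, ∃ h : C' ⟶ X, f ≫ h = g

def ContravariantlyFinite (C : Set (ModuleCat.{0} A)) : Prop :=
  ∀ D : ModuleCat.{0} A, Module.Finite A D → ∃ C' : ModuleCat.{0} A, InAdd C C' ∧
    ∃ f : C' ⟶ D, ∀ X ∈ C, ∀ g : X ⟶ D, ∃ h : X ⟶ C', h ≫ f = g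

def FinRep (S : Set (ModuleCat.{0} A)) : Prop :=
  ∃ (ι : Type) (_ : Finite ι) (rep : ι → ModuleCat.{0} A),
    ∀ M ∈ S, ∃ i, Nonempty (M ≅ rep i)

def IsProjCover {P S : ModuleCat.{0} A} (π : P ⟶ S) : Prop :=
  Projective P ∧ Epi π ∧ ∀ (Q : ModuleCat.{0} A) (g : Q ⟶ P), Epi (g ≫ π) → Epi g

def IsInjEnv {S I : ModuleCat.{0} A} (ι : S ⟶ I) : Prop :=
  Injective I ∧ Mono ι ∧ ∀ (Q : ModuleCat.{0} A) (g : I ⟶ Q), Mono (ι ≫ g) → Mono g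

def modfg (A : Type) [Ring A] : Set (ModuleCat.{0} A) := {X | Module.Finite A X}

def HasDeltaFiltration {A : Type} [Ring A] {n : ℕ} (Δ : Fin n → ModuleCat.{0} A)
    (M : ModuleCat.{0} A) : Prop :=
  ∃ (s : ℕ) (c : Fin (s+1) → Submodule A M),
    Monotone c ∧ c 0 = ⊥ ∧ c (Fin.last s) = ⊤ ∧
    ∀ i : Fin s, ∃ j : Fin n,
      Nonempty ((↥(c i.succ) ⧸ Submodule.comap (c i.succ).subtype (c i.castSucc))
          ≃ₗ[A] ↥(Δ j))

def FDelta {A : Type} [Ring A] {n : ℕ} (Δ : Fin n → ModuleCat.{0} A) :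
    Set (ModuleCat.{0} A) :=
  {M | Module.Finite A M ∧ HasDeltaFiltration Δ M}

section AuxStmt7

variable {A : Type} [Ring A]

lemma summand_refl7 (M : ModuleCat.{0} A) : Summand M M := ⟨𝟙 M, 𝟙 M, Category.comp_id _⟩

lemma summand_trans7 {D M N : ModuleCat.{0} A} (h1 : Summand D M) (h2 : Summand M N) :
    Summand D N := by
  obtain ⟨i1, r1, h1⟩ := h1; obtain ⟨i2, r2, h2⟩ := h2
  refine ⟨i1 ≫ i2, r2 ≫ r1, ?_⟩
  rw [Category.assoc, ← Category.assoc i2, h2, Category.id_comp, h1]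

lemma modfg_summand7 {D M : ModuleCat.{0} A} (hM : M ∈ modfg A) (h : Summand D M) :
    D ∈ modfg A := by
  obtain ⟨i, r, hir⟩ := h
  have hsurj : Function.Surjective r.hom := by
    intro d
    exact ⟨i.hom d, LinearMap.congr_fun (congrArg ModuleCat.Hom.hom hir) d⟩
  have : Module.Finite A M := hM
  exact Module.Finite.of_surjective r.hom hsurj

lemma pRest_summand7 : ∀ (k : ℕ) {D M : ModuleCat.{0} A}, M ∈ pRest (modfg A) k →
    Summand D M → D ∈ pRest (modfg A) k
  | 0, _, _, hM, h => modfg_summand7 hM h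
  | (k+1), _, _, hM, h =>
    ⟨pRest_summand7 k hM.1 h, fun E hE hED => hM.2 E hE (summand_trans7 hED h)⟩

lemma iRest_summand7 : ∀ (k : ℕ) {D M : ModuleCat.{0} A}, M ∈ iRest (modfg A) k →
    Summand D M → D ∈ iRest (modfg A) k
  | 0, _, _, hM, h => modfg_summand7 hM h
  | (k+1), _, _, hM, h =>
    ⟨iRest_summand7 k hM.1 h, fun E hE hED => hM.2 E hE (summand_trans7 hED h)⟩

lemma pRest_sub_modfg7 : ∀ (k : ℕ), pRest (modfg A) k ⊆ modfg A
  | 0 => fun _ h => h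
  | (k+1) => fun _ h => pRest_sub_modfg7 k h.1

lemma iRest_sub_modfg7 : ∀ (k : ℕ), iRest (modfg A) k ⊆ modfg A
  | 0 => fun _ h => h
  | (k+1) => fun _ h => iRest_sub_modfg7 k h.1

lemma subsingleton_of_id_eq_zero7 {X : ModuleCat.{0} A} (h : 𝟙 X = (0 : X ⟶ X)) :
    Subsingleton X := by
  refine ⟨fun a b => ?_⟩
  have ha : a = 0 := LinearMap.congr_fun (congrArg ModuleCat.Hom.hom h) a
  have hb : b = 0 := LinearMap.congr_fun (congrArg ModuleCat.Hom.hom h) b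
  rw [ha, hb]

end AuxStmt7
section AuxStmt7b

variable {A : Type} [Ring A]

lemma relRad_comp_left7 {C : Set (ModuleCat.{0} A)} {M N K : ModuleCat.{0} A}
    {f : M ⟶ N} (hf : f ∈ relRad C M N) (t : N ⟶ K) : f ≫ t ∈ relRad C M K := by
  intro X hX hXi u v hiso
  refine hf X hX hXi u (t ≫ v) ?_
  simpa only [Category.assoc] using hiso

lemma relRad_comp_right7 {C : Set (ModuleCat.{0} A)} {M N K : ModuleCat.{0} A}
    {f : N ⟶ K} (hf : f ∈ relRad C N K) (s : M ⟶ N) : s ≫ f ∈ relRad C M K := by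
  intro X hX hXi u v hiso
  refine hf X hX hXi (u ≫ s) v ?_
  simpa only [Category.assoc] using hiso

lemma mem_radPow_succ7 {C : Set (ModuleCat.{0} A)} {n : ℕ} {M L N : ModuleCat.{0} A}
    {g : M ⟶ L} {h : L ⟶ N} (hg : g ∈ radPow C n M L) (hh : h ∈ relRad C L N) :
    g ≫ h ∈ radPow C (n + 1) M N :=
  AddSubgroup.subset_closure ⟨L, g, h, hg, hh, rfl⟩

/-- postcomposition preserves radPow -/
lemma radPow_post7 {C : Set (ModuleCat.{0} A)} :
    ∀ (n : ℕ) {M N K : ModuleCat.{0} A} {f : M ⟶ N} (_ : f ∈ radPow C n M N) (t : N ⟶ K),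
      f ≫ t ∈ radPow C n M K := by
  intro n
  induction n with
  | zero => intro M N K f _ t; exact AddSubgroup.mem_top _
  | succ m _ =>
    intro M N K f hf t
    let φ : (M ⟶ N) →+ (M ⟶ K) :=
      AddMonoidHom.mk' (fun x => x ≫ t) (fun a b => Preadditive.add_comp _ _ _ _ _ _)
    have hsub : {f : M ⟶ N | ∃ (L : ModuleCat.{0} A) (g : M ⟶ L) (h : L ⟶ N),
        g ∈ radPow C m M L ∧ h ∈ relRad C L N ∧ f = g ≫ h} ⊆
        (radPow C (m+1) M K).comap φ := by
      rintro x ⟨L, g, h, hg, hh, rfl⟩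
      show (g ≫ h) ≫ t ∈ radPow C (m+1) M K
      rw [Category.assoc]
      exact mem_radPow_succ7 hg (relRad_comp_left7 hh t)
    exact (AddSubgroup.closure_le _).mpr hsub hf

/-- precomposition preserves radPow -/
lemma radPow_pre7 {C : Set (ModuleCat.{0} A)} :
    ∀ (n : ℕ) {M N K : ModuleCat.{0} A} {f : M ⟶ N} (_ : f ∈ radPow C n M N) (s : K ⟶ M),
      s ≫ f ∈ radPow C n K N := by
  intro n
  induction n with
  | zero => intro M N K f _ s; exact AddSubgroup.mem_top _
  | succ m ih =>
    intro M N K f hf s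
    let φ : (M ⟶ N) →+ (K ⟶ N) :=
      AddMonoidHom.mk' (fun x => s ≫ x) (fun a b => Preadditive.comp_add _ _ _ _ _ _)
    have hsub : {f : M ⟶ N | ∃ (L : ModuleCat.{0} A) (g : M ⟶ L) (h : L ⟶ N),
        g ∈ radPow C m M L ∧ h ∈ relRad C L N ∧ f = g ≫ h} ⊆
        (radPow C (m+1) K N).comap φ := by
      rintro x ⟨L, g, h, hg, hh, rfl⟩
      show s ≫ (g ≫ h) ∈ radPow C (m+1) K N
      rw [← Category.assoc]
      exact mem_radPow_succ7 (ih hg s) hh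
    exact (AddSubgroup.closure_le _).mpr hsub hf

/-- relRad composed with radPow n lands in radPow (n+1) (relRad-first version) -/
lemma relRad_comp_radPow7 {C : Set (ModuleCat.{0} A)} :
    ∀ (n : ℕ) {M L N : ModuleCat.{0} A} {a : M ⟶ L} {b : L ⟶ N}
      (_ : a ∈ relRad C M L) (_ : b ∈ radPow C n L N),
      a ≫ b ∈ radPow C (n + 1) M N := by
  intro n
  induction n with
  | zero =>
    intro M L N a b ha _
    have : a ≫ b ∈ relRad C M N := relRad_comp_left7 ha b
    have h1 : a ≫ b = 𝟙 M ≫ (a ≫ b) := (Category.id_comp _).symm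
    rw [h1]
    exact mem_radPow_succ7 (AddSubgroup.mem_top _) this
  | succ m ih =>
    intro M L N a b ha hb
    let φ : (L ⟶ N) →+ (M ⟶ N) :=
      AddMonoidHom.mk' (fun x => a ≫ x) (fun x y => Preadditive.comp_add _ _ _ _ _ _)
    have hsub : {f : L ⟶ N | ∃ (L' : ModuleCat.{0} A) (g : L ⟶ L') (h : L' ⟶ N),
        g ∈ radPow C m L L' ∧ h ∈ relRad C L' N ∧ f = g ≫ h} ⊆
        (radPow C (m+2) M N).comap φ := by
      rintro x ⟨L', g, h, hg, hh, rfl⟩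
      show a ≫ (g ≫ h) ∈ radPow C (m+2) M N
      rw [← Category.assoc]
      exact mem_radPow_succ7 (ih ha hg) hh
    exact (AddSubgroup.closure_le _).mpr hsub hb

end AuxStmt7b
section AuxStmt7c

variable {A : Type} [Ring A]

lemma relRad_of_no_section7 {C : Set (ModuleCat.{0} A)} {Y N : ModuleCat.{0} A}
    (hN : Indec N) {e : Y ⟶ N} (hsec : ∀ s : N ⟶ Y, ¬ s ≫ e = 𝟙 N) :
    e ∈ relRad C Y N := by
  intro X _ hX u v hiso
  obtain ⟨χ, hχ₁, hχ₂⟩ := hiso.out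
  have hχ₁' : ∀ {Z : ModuleCat.{0} A} (f : X ⟶ Z), u ≫ e ≫ v ≫ χ ≫ f = f := by
    intro Z f
    simpa only [Category.assoc, Category.id_comp] using congrArg (· ≫ f) hχ₁
  set ε : N ⟶ N := v ≫ χ ≫ u ≫ e with hε
  have hidem : ε ≫ ε = ε := by
    rw [hε]
    simp only [Category.assoc]
    rw [hχ₁' (u ≫ e)]
  rcases hN.2 ε hidem with h0 | h1
  · have hψ : u ≫ e ≫ v = (u ≫ e) ≫ ε ≫ v := by
      rw [hε]
      simp only [Category.assoc]
      rw [hχ₁' (u ≫ e ≫ v)]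
    rw [h0] at hψ
    simp only [Limits.zero_comp, Limits.comp_zero] at hψ
    have hid0 : (𝟙 X : X ⟶ X) = 0 := by
      rw [← hχ₁, hψ, Limits.zero_comp]
    exact absurd (subsingleton_of_id_eq_zero7 hid0) hX.1
  · exact hsec (v ≫ χ ≫ u) (by simpa only [Category.assoc] using h1)

lemma relRad_of_no_retraction7 {C : Set (ModuleCat.{0} A)} {Z W : ModuleCat.{0} A}
    (hZ : Indec Z) {m : Z ⟶ W} (hret : ∀ r : W ⟶ Z, ¬ m ≫ r = 𝟙 Z) :
    m ∈ relRad C Z W := by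
  intro X _ hX u v hiso
  obtain ⟨χ, hχ₁, hχ₂⟩ := hiso.out
  have hχ₁' : ∀ {Z' : ModuleCat.{0} A} (f : X ⟶ Z'), u ≫ m ≫ v ≫ χ ≫ f = f := by
    intro Z' f
    simpa only [Category.assoc, Category.id_comp] using congrArg (· ≫ f) hχ₁
  set δ : Z ⟶ Z := m ≫ v ≫ χ ≫ u with hδ
  have hidem : δ ≫ δ = δ := by
    rw [hδ]
    simp only [Category.assoc]
    congr 1
    rw [hχ₁' u]
  rcases hZ.2 δ hidem with h0 | h1
  · have hψ : u ≫ δ ≫ m ≫ v = u ≫ m ≫ v := by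
      rw [hδ]
      simp only [Category.assoc]
      exact hχ₁' (u ≫ m ≫ v)
    rw [h0] at hψ
    simp only [Limits.zero_comp, Limits.comp_zero] at hψ
    have hid0 : (𝟙 X : X ⟶ X) = 0 := by
      rw [← hχ₁, ← hψ, Limits.zero_comp]
    exact absurd (subsingleton_of_id_eq_zero7 hid0) hX.1
  · exact hret (v ≫ χ ≫ u) (by simpa only [Category.assoc] using h1)

end AuxStmt7c
section AuxStmt7d

variable {A : Type} [Ring A]

lemma prod_decomp7 (M N : ModuleCat.{0} A) :
    ∃ (p₁ : ModuleCat.of A (M × N) ⟶ M) (i₁ : M ⟶ ModuleCat.of A (M × N))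
      (p₂ : ModuleCat.of A (M × N) ⟶ N) (i₂ : N ⟶ ModuleCat.of A (M × N)),
      p₁ ≫ i₁ + p₂ ≫ i₂ = 𝟙 (ModuleCat.of A (M × N)) := by
  refine ⟨ModuleCat.ofHom (LinearMap.fst A M N), ModuleCat.ofHom (LinearMap.inl A M N),
    ModuleCat.ofHom (LinearMap.snd A M N), ModuleCat.ofHom (LinearMap.inr A M N), ?_⟩
  apply ModuleCat.hom_ext
  apply LinearMap.ext
  intro x
  show ((x.1 : M), (0 : N)) + ((0 : M), (x.2 : N)) = x
  simp

/-- splitting of an idempotent on `of A ↥p` through the submodule `(range e).map p.subtype`. -/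
lemma idem_split7 {W : ModuleCat.{0} A} (p : Submodule A W)
    (e : ModuleCat.of A p ⟶ ModuleCat.of A p) (he : e ≫ e = e) :
    ∃ (r : ModuleCat.of A p ⟶
        ModuleCat.of A ((LinearMap.range e.hom).map p.subtype))
      (i : ModuleCat.of A ((LinearMap.range e.hom).map p.subtype) ⟶
        ModuleCat.of A p),
      i ≫ r = 𝟙 _ ∧ r ≫ i = e := by
  classical
  set e' : ↥p →ₗ[A] ↥p := e.hom with he'
  have hee : ∀ x : ↥p, e' (e' x) = e' x := fun x => LinearMap.congr_fun (congrArg ModuleCat.Hom.hom he) x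
  set q : Submodule A W := (LinearMap.range e').map p.subtype with hq
  have hqle : q ≤ p := Submodule.map_subtype_le p _
  refine ⟨ModuleCat.ofHom (LinearMap.codRestrict q ((p.subtype).comp e')
      (fun x => Submodule.mem_map.mpr ⟨e' x, LinearMap.mem_range_self _ x, rfl⟩)),
    ModuleCat.ofHom (Submodule.inclusion hqle), ?_, ?_⟩
  · apply ModuleCat.hom_ext
    apply LinearMap.ext
    intro y
    obtain ⟨z, hz, hzv⟩ := Submodule.mem_map.mp y.2
    obtain ⟨w, hw⟩ := hz
    apply Subtype.ext
    show (e' (Submodule.inclusion hqle y)).1 = y.1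
    have h1 : Submodule.inclusion hqle y = e' w := by
      apply Subtype.ext
      show y.1 = (e' w).1
      rw [hw]
      exact hzv.symm
    calc (e' (Submodule.inclusion hqle y)).1 = (e' (e' w)).1 := by rw [h1]
      _ = (e' w).1 := by rw [hee]
      _ = z.1 := by rw [hw]
      _ = y.1 := hzv
  · apply ModuleCat.hom_ext
    apply LinearMap.ext
    intro x
    apply Subtype.ext
    rfl

lemma range_map_lt7 {W : ModuleCat.{0} A} (p : Submodule A W)
    (e : ModuleCat.of A p ⟶ ModuleCat.of A p) (he : e ≫ e = e) (hne : e ≠ 𝟙 _) :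
    (LinearMap.range e.hom).map p.subtype < p := by
  refine lt_of_le_of_ne (Submodule.map_subtype_le p _) ?_
  intro heq
  apply hne
  apply ModuleCat.hom_ext
  apply LinearMap.ext
  intro x
  have hx : x.1 ∈ (LinearMap.range e.hom).map p.subtype := by
    rw [heq]; exact x.2
  obtain ⟨z, ⟨w, hw⟩, hzv⟩ := Submodule.mem_map.mp hx
  have hzx : z = x := Subtype.ext hzv
  show e.hom x = x
  have hee : ∀ y : ↥p, e.hom (e.hom y) = e.hom y :=
    fun y => LinearMap.congr_fun (congrArg ModuleCat.Hom.hom he) y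
  rw [← hzx, ← hw]
  exact hee w

end AuxStmt7d
section AuxStmt7e

variable {A : Type} [Ring A]

lemma hom_zero_of_subsingleton_target7 {P W : ModuleCat.{0} A} [Subsingleton W]
    (f : P ⟶ W) : f = 0 :=
  ModuleCat.hom_ext (LinearMap.ext fun _ => Subsingleton.elim _ _)

lemma hom_zero_of_subsingleton_source7 {P W : ModuleCat.{0} A} [Subsingleton P]
    (f : P ⟶ W) : f = 0 :=
  ModuleCat.hom_ext (LinearMap.ext fun x => by rw [Subsingleton.elim x 0]; simp)

lemma top_summand7 (Y : ModuleCat.{0} A) :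
    ∃ (i : ModuleCat.of A (⊤ : Submodule A Y) ⟶ Y)
      (r : Y ⟶ ModuleCat.of A (⊤ : Submodule A Y)),
      i ≫ r = 𝟙 (ModuleCat.of A (⊤ : Submodule A Y)) ∧ r ≫ i = 𝟙 Y := by
  refine ⟨ModuleCat.ofHom (⊤ : Submodule A Y).subtype,
    ModuleCat.ofHom (LinearMap.codRestrict ⊤ LinearMap.id (fun _ => Submodule.mem_top)), ?_, ?_⟩
  · apply ModuleCat.hom_ext; apply LinearMap.ext; intro x; apply Subtype.ext; rfl
  · apply ModuleCat.hom_ext; apply LinearMap.ext; intro x; rfl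

/-- Every map from a projective into `add (pRest (modfg A) n)` lies in `radPow n`. -/
lemma main_proj7 [IsArtinianRing A] (P : ModuleCat.{0} A) (hP : CategoryTheory.Projective P) :
    ∀ n : ℕ, ∀ Y : ModuleCat.{0} A, InAdd (pRest (modfg A) n) Y →
      ∀ f : P ⟶ Y, f ∈ radPow (modfg A) n P Y := by
  haveI := hP
  intro n
  induction n with
  | zero => intro Y _ f; exact AddSubgroup.mem_top _
  | succ n ih =>
    -- base claim: for submodules of a fixed fg module
    have base : ∀ (W : ModuleCat.{0} A), Module.Finite A W → ∀ (p : Submodule A W),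
        ModuleCat.of A p ∈ pRest (modfg A) (n+1) →
        ∀ f : P ⟶ ModuleCat.of A p, f ∈ radPow (modfg A) (n+1) P (ModuleCat.of A p) := by
      intro W hWfg
      haveI := hWfg
      haveI : IsArtinian A W := isArtinian_of_fg_of_artinian'
      intro p
      induction p using WellFoundedLT.induction with
      | ind p IH =>
        intro hp f
        by_cases hss : Subsingleton (↥p)
        · haveI : Subsingleton (ModuleCat.of A p) := hss
          rw [hom_zero_of_subsingleton_target7 f]
          exact zero_mem _
        by_cases hind : Indec (ModuleCat.of A p)
        · -- indecomposable case
          have hnotsplit : ¬ SplitProjIn (pRest (modfg A) n) (ModuleCat.of A p) :=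
            fun hsp => hp.2 _ ⟨hp.1, hind, hsp⟩ (summand_refl7 _)
          rw [SplitProjIn] at hnotsplit
          push_neg at hnotsplit
          obtain ⟨Q, hQ, q, hq, hnosec⟩ := hnotsplit
          haveI := hq
          have hrel : q ∈ relRad (modfg A) Q (ModuleCat.of A p) :=
            relRad_of_no_section7 hind hnosec
          have hfac : CategoryTheory.Projective.factorThru f q ≫ q = f :=
            CategoryTheory.Projective.factorThru_comp f q
          rw [← hfac]
          exact mem_radPow_succ7 (ih Q hQ _) hrel
        · -- decomposable case: split idempotents
          have hkey : ∀ e : ModuleCat.of A p ⟶ ModuleCat.of A p, e ≫ e = e → e ≠ 𝟙 _ →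
              f ≫ e ∈ radPow (modfg A) (n+1) P (ModuleCat.of A p) := by
            intro e he hne
            obtain ⟨r, i, hir, hri⟩ := idem_split7 p e he
            have hlt := range_map_lt7 p e he hne
            have hmem : ModuleCat.of A ((LinearMap.range e.hom).map p.subtype)
                ∈ pRest (modfg A) (n+1) :=
              pRest_summand7 (n+1) hp ⟨i, r, hir⟩
            have h1 : f ≫ e = (f ≫ r) ≫ i := by rw [Category.assoc, hri]
            rw [h1]
            exact radPow_post7 (n+1) (IH _ hlt hmem (f ≫ r)) i
          obtain ⟨e, he, hne0, hne1⟩ : ∃ e : ModuleCat.of A p ⟶ ModuleCat.of A p,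
              e ≫ e = e ∧ e ≠ 0 ∧ e ≠ 𝟙 _ := by
            rw [Indec, not_and_or] at hind
            rcases hind with h | h
            · exact absurd (not_not.mp h) hss
            · push_neg at h
              obtain ⟨e, he, hh⟩ := h
              exact ⟨e, he, hh.1, hh.2⟩
          have hsum : f ≫ e + f ≫ (𝟙 _ - e) = f := by
            rw [Preadditive.comp_sub, Category.comp_id]
            abel
          have he2 : (𝟙 (ModuleCat.of A p) - e) ≫ (𝟙 _ - e) = 𝟙 _ - e := by
            simp only [Preadditive.sub_comp, Preadditive.comp_sub, Category.id_comp,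
              Category.comp_id, he]
            abel
          have hne1' : (𝟙 (ModuleCat.of A p) - e) ≠ 𝟙 _ := by
            intro hcon
            exact hne0 (by rwa [sub_eq_self] at hcon)
          rw [← hsum]
          exact add_mem (hkey e he hne1) (hkey _ he2 hne1')
    -- now induction over InAdd
    intro Y hY
    induction hY with
    | @base Y' hmem =>
      obtain ⟨i, r, hir, hri⟩ := top_summand7 Y'
      have hfg : Module.Finite A Y' := pRest_sub_modfg7 (n+1) hmem
      have hmem' : ModuleCat.of A (⊤ : Submodule A Y') ∈ pRest (modfg A) (n+1) :=
        pRest_summand7 (n+1) hmem ⟨i, r, hir⟩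
      intro f
      have h1 : f = (f ≫ r) ≫ i := by rw [Category.assoc, hri, Category.comp_id]
      rw [h1]
      exact radPow_post7 (n+1) (base Y' hfg ⊤ hmem' (f ≫ r)) i
    | @prod M' N' hM hN ihM ihN =>
      obtain ⟨p₁, i₁, p₂, i₂, hsum⟩ := prod_decomp7 M' N'
      intro f
      have h1 : f = (f ≫ p₁) ≫ i₁ + (f ≫ p₂) ≫ i₂ := by
        rw [Category.assoc, Category.assoc, ← Preadditive.comp_add, hsum, Category.comp_id]
      rw [h1]
      exact add_mem (radPow_post7 (n+1) (ihM (f ≫ p₁)) i₁)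
        (radPow_post7 (n+1) (ihN (f ≫ p₂)) i₂)
    | @summand D M' hM hsum ihM =>
      obtain ⟨i, r, hir⟩ := hsum
      intro f
      have h1 : f = (f ≫ i) ≫ r := by rw [Category.assoc, hir, Category.comp_id]
      rw [h1]
      exact radPow_post7 (n+1) (ihM (f ≫ i)) r

end AuxStmt7e
section AuxStmt7f

variable {A : Type} [Ring A]

/-- Every map from `add (iRest (modfg A) n)` into an injective lies in `radPow n`. -/
lemma main_inj7 [IsArtinianRing A] (I : ModuleCat.{0} A) (hI : CategoryTheory.Injective I) :
    ∀ n : ℕ, ∀ Z : ModuleCat.{0} A, InAdd (iRest (modfg A) n) Z →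
      ∀ f : Z ⟶ I, f ∈ radPow (modfg A) n Z I := by
  haveI := hI
  intro n
  induction n with
  | zero => intro Z _ f; exact AddSubgroup.mem_top _
  | succ n ih =>
    have base : ∀ (W : ModuleCat.{0} A), Module.Finite A W → ∀ (p : Submodule A W),
        ModuleCat.of A p ∈ iRest (modfg A) (n+1) →
        ∀ f : ModuleCat.of A p ⟶ I, f ∈ radPow (modfg A) (n+1) (ModuleCat.of A p) I := by
      intro W hWfg
      haveI := hWfg
      haveI : IsArtinian A W := isArtinian_of_fg_of_artinian'
      intro p
      induction p using WellFoundedLT.induction with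
      | ind p IH =>
        intro hp f
        by_cases hss : Subsingleton (↥p)
        · haveI : Subsingleton (ModuleCat.of A p) := hss
          rw [hom_zero_of_subsingleton_source7 f]
          exact zero_mem _
        by_cases hind : Indec (ModuleCat.of A p)
        · have hnotsplit : ¬ SplitInjIn (iRest (modfg A) n) (ModuleCat.of A p) :=
            fun hsp => hp.2 _ ⟨hp.1, hind, hsp⟩ (summand_refl7 _)
          rw [SplitInjIn] at hnotsplit
          push_neg at hnotsplit
          obtain ⟨Q, hQ, m, hm, hnoret⟩ := hnotsplit
          haveI := hm
          have hrel : m ∈ relRad (modfg A) (ModuleCat.of A p) Q :=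
            relRad_of_no_retraction7 hind hnoret
          have hfac : m ≫ CategoryTheory.Injective.factorThru f m = f :=
            CategoryTheory.Injective.comp_factorThru f m
          rw [← hfac]
          exact relRad_comp_radPow7 n hrel (ih Q hQ _)
        · have hkey : ∀ e : ModuleCat.of A p ⟶ ModuleCat.of A p, e ≫ e = e → e ≠ 𝟙 _ →
              e ≫ f ∈ radPow (modfg A) (n+1) (ModuleCat.of A p) I := by
            intro e he hne
            obtain ⟨r, i, hir, hri⟩ := idem_split7 p e he
            have hlt := range_map_lt7 p e he hne
            have hmem : ModuleCat.of A ((LinearMap.range e.hom).map p.subtype)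
                ∈ iRest (modfg A) (n+1) :=
              iRest_summand7 (n+1) hp ⟨i, r, hir⟩
            have h1 : e ≫ f = r ≫ (i ≫ f) := by rw [← Category.assoc, hri]
            rw [h1]
            exact radPow_pre7 (n+1) (IH _ hlt hmem (i ≫ f)) r
          obtain ⟨e, he, hne0, hne1⟩ : ∃ e : ModuleCat.of A p ⟶ ModuleCat.of A p,
              e ≫ e = e ∧ e ≠ 0 ∧ e ≠ 𝟙 _ := by
            rw [Indec, not_and_or] at hind
            rcases hind with h | h
            · exact absurd (not_not.mp h) hss
            · push_neg at h
              obtain ⟨e, he, hh⟩ := h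
              exact ⟨e, he, hh.1, hh.2⟩
          have hsum : e ≫ f + (𝟙 _ - e) ≫ f = f := by
            rw [Preadditive.sub_comp, Category.id_comp]
            abel
          have he2 : (𝟙 (ModuleCat.of A p) - e) ≫ (𝟙 _ - e) = 𝟙 _ - e := by
            simp only [Preadditive.sub_comp, Preadditive.comp_sub, Category.id_comp,
              Category.comp_id, he]
            abel
          have hne1' : (𝟙 (ModuleCat.of A p) - e) ≠ 𝟙 _ := by
            intro hcon
            exact hne0 (by rwa [sub_eq_self] at hcon)
          rw [← hsum]
          exact add_mem (hkey e he hne1) (hkey _ he2 hne1')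
    intro Z hZ
    induction hZ with
    | @base Z' hmem =>
      obtain ⟨i, r, hir, hri⟩ := top_summand7 Z'
      have hfg : Module.Finite A Z' := iRest_sub_modfg7 (n+1) hmem
      have hmem' : ModuleCat.of A (⊤ : Submodule A Z') ∈ iRest (modfg A) (n+1) :=
        iRest_summand7 (n+1) hmem ⟨i, r, hir⟩
      intro f
      have h1 : f = r ≫ (i ≫ f) := by rw [← Category.assoc, hri, Category.id_comp]
      rw [h1]
      exact radPow_pre7 (n+1) (base Z' hfg ⊤ hmem' (i ≫ f)) r
    | @prod M' N' hM hN ihM ihN =>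
      obtain ⟨p₁, i₁, p₂, i₂, hsum⟩ := prod_decomp7 M' N'
      intro f
      have h1 : f = p₁ ≫ (i₁ ≫ f) + p₂ ≫ (i₂ ≫ f) := by
        rw [← Category.assoc, ← Category.assoc, ← Preadditive.add_comp, hsum,
          Category.id_comp]
      rw [h1]
      exact add_mem (radPow_pre7 (n+1) (ihM (i₁ ≫ f)) p₁)
        (radPow_pre7 (n+1) (ihN (i₂ ≫ f)) p₂)
    | @summand D M' hM hsumm ihM =>
      obtain ⟨i, r, hir⟩ := hsumm
      intro f
      have h1 : f = i ≫ (r ≫ f) := by rw [← Category.assoc, hir, Category.id_comp]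
      rw [h1]
      exact radPow_pre7 (n+1) (ihM (r ≫ f)) i

end AuxStmt7f
section AuxStmt7g

variable {A : Type} [Ring A]

lemma Pinf_mem_pRest7 {M : ModuleCat.{0} A} (hMP : M ∈ Pinf (modfg A)) :
    ∀ k, M ∈ pRest (modfg A) k := by
  obtain ⟨hMfg', hMind, hnot⟩ := hMP
  intro k
  induction k with
  | zero => exact hMfg'
  | succ k ihk =>
    refine ⟨ihk, ?_⟩
    rintro D ⟨hD1, hDind, hDsp⟩ ⟨i, r, hir⟩
    have he : (r ≫ i) ≫ (r ≫ i) = r ≫ i := by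
      rw [Category.assoc, ← Category.assoc i, hir, Category.id_comp]
    rcases hMind.2 _ he with h0 | h1
    · have hD0 : (𝟙 D : D ⟶ D) = 0 := by
        have h2 : (𝟙 D : D ⟶ D) = i ≫ (r ≫ i) ≫ r := by
          simp only [← Category.assoc, hir, Category.id_comp]
        rw [h2, h0, Limits.zero_comp, Limits.comp_zero]
      exact absurd (subsingleton_of_id_eq_zero7 hD0) hDind.1
    · -- r ≫ i = 𝟙 M, so M ≅ D and M is split projective: contradiction with hnot k
      refine absurd (⟨ihk, hMind, ?_⟩ : M ∈ Ppart (modfg A) k) (hnot k)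
      intro Q hQ f hf
      haveI : CategoryTheory.IsIso r := ⟨i, h1, hir⟩
      haveI := hf
      haveI : CategoryTheory.Epi (f ≫ r) := CategoryTheory.epi_comp f r
      obtain ⟨s, hs⟩ := hDsp Q hQ (f ≫ r) inferInstance
      refine ⟨r ≫ s, ?_⟩
      -- s ≫ f = i, hence (r ≫ s) ≫ f = r ≫ i = 𝟙 M
      have hsf : s ≫ f = i := by
        have h3 : (s ≫ (f ≫ r)) ≫ i = 𝟙 D ≫ i := by rw [hs]
        rw [Category.id_comp] at h3
        simp only [Category.assoc] at h3
        rw [h1, Category.comp_id] at h3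
        exact h3
      rw [Category.assoc, hsf, h1]

lemma Iinf_mem_iRest7 {M : ModuleCat.{0} A} (hMI : M ∈ Iinf (modfg A)) :
    ∀ k, M ∈ iRest (modfg A) k := by
  obtain ⟨hMfg', hMind, hnot⟩ := hMI
  intro k
  induction k with
  | zero => exact hMfg'
  | succ k ihk =>
    refine ⟨ihk, ?_⟩
    rintro D ⟨hD1, hDind, hDsp⟩ ⟨i, r, hir⟩
    have he : (r ≫ i) ≫ (r ≫ i) = r ≫ i := by
      rw [Category.assoc, ← Category.assoc i, hir, Category.id_comp]
    rcases hMind.2 _ he with h0 | h1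
    · have hD0 : (𝟙 D : D ⟶ D) = 0 := by
        have h2 : (𝟙 D : D ⟶ D) = i ≫ (r ≫ i) ≫ r := by
          simp only [← Category.assoc, hir, Category.id_comp]
        rw [h2, h0, Limits.zero_comp, Limits.comp_zero]
      exact absurd (subsingleton_of_id_eq_zero7 hD0) hDind.1
    · refine absurd (⟨ihk, hMind, ?_⟩ : M ∈ Ipart (modfg A) k) (hnot k)
      intro Q hQ f hf
      haveI : CategoryTheory.IsIso i := ⟨r, hir, h1⟩
      haveI := hf
      haveI : CategoryTheory.Mono (i ≫ f) := CategoryTheory.mono_comp i f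
      obtain ⟨t, ht⟩ := hDsp Q hQ (i ≫ f) inferInstance
      refine ⟨t ≫ i, ?_⟩
      -- f ≫ t = r, hence f ≫ (t ≫ i) = r ≫ i = 𝟙 M
      have hft : f ≫ t = r := by
        have h3 : r ≫ ((i ≫ f) ≫ t) = r ≫ 𝟙 D := by rw [ht]
        rw [Category.comp_id] at h3
        simp only [Category.assoc] at h3
        rw [← Category.assoc r i, h1, Category.id_comp] at h3
        exact h3
      rw [← Category.assoc, hft, h1]

end AuxStmt7g
/-- for A of infinite type, M ∈ P_∞ ∩ I_∞ indecomposable and S a simple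
submodule (summand of the socle) of M with inclusion g, θ_S = ι_S ∘ π_S factors as
h ∘ (g ∘ π_S) and hence lies in (rad_A^∞)². -/
theorem stmt7 {R : Type} [CommRing R] [IsArtinianRing R] {A : Type} [Ring A]
    [Algebra R A] [Module.Finite R A]
    (hinf : ¬ FinRep {X : ModuleCat.{0} A | Module.Finite A X ∧ Indec X})
    (M S P I : ModuleCat.{0} A)
    (hMfg : Module.Finite A M) (hSfg : Module.Finite A S)
    (hPfg : Module.Finite A P) (hIfg : Module.Finite A I)
    (hMP : M ∈ Pinf (modfg A)) (hMI : M ∈ Iinf (modfg A)) (hMind : Indec M)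
    (hS : IsSimpleModule A S) (g : S ⟶ M) (hg : CategoryTheory.Mono g)
    (π : P ⟶ S) (hπ : IsProjCover π) (ι : S ⟶ I) (hι : IsInjEnv ι) :
    (∃ h : M ⟶ I, (π ≫ g) ≫ h = π ≫ ι) ∧
    ∃ (N : ModuleCat.{0} A) (f₁ : P ⟶ N) (f₂ : N ⟶ I),
      f₁ ∈ radInf (modfg A) P N ∧ f₂ ∈ radInf (modfg A) N I ∧ π ≫ ι = f₁ ≫ f₂ := by
  haveI hInj : Injective I := hι.1
  haveI hg' := hg
  haveI : IsArtinianRing A := IsArtinianRing.of_finite R A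
  haveI hProj : Projective P := hπ.1
  set h : M ⟶ I := Injective.factorThru ι g with hhdef
  have hgh : g ≫ h = ι := Injective.comp_factorThru ι g
  have hfac : (π ≫ g) ≫ h = π ≫ ι := by rw [Category.assoc, hgh]
  refine ⟨⟨h, hfac⟩, M, π ≫ g, h, ?_, ?_, hfac.symm⟩
  · rw [radInf, AddSubgroup.mem_iInf]
    intro n
    have hpR := Pinf_mem_pRest7 hMP n
    have hnot : ¬ SplitProjIn (pRest (modfg A) n) M := fun hsp => hMP.2.2 n ⟨hpR, hMind, hsp⟩
    rw [SplitProjIn] at hnot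
    push_neg at hnot
    obtain ⟨Q, hQ, q, hq, hnosec⟩ := hnot
    haveI := hq
    have hrel : q ∈ relRad (modfg A) Q M := relRad_of_no_section7 hMind hnosec
    have hfac2 : Projective.factorThru (π ≫ g) q ≫ q = π ≫ g :=
      Projective.factorThru_comp _ _
    rw [← hfac2]
    exact mem_radPow_succ7 (main_proj7 P hProj n Q hQ _) hrel
  · rw [radInf, AddSubgroup.mem_iInf]
    intro n
    have hiR := Iinf_mem_iRest7 hMI n
    have hnot : ¬ SplitInjIn (iRest (modfg A) n) M := fun hsp => hMI.2.2 n ⟨hiR, hMind, hsp⟩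
    rw [SplitInjIn] at hnot
    push_neg at hnot
    obtain ⟨Q, hQ, m, hm, hnoret⟩ := hnot
    haveI := hm
    have hrel : m ∈ relRad (modfg A) M Q := relRad_of_no_retraction7 hMind hnoret
    have hfac2 : m ≫ Injective.factorThru h m = h := Injective.comp_factorThru _ _
    rw [← hfac2]
    exact relRad_comp_radPow7 n hrel (main_inj7 I hInj n Q hQ _)
end

section
/- Let A be a quasi-hereditary algebra and ℱ(Δ) the category of Δ-good modules with its preinjective partition {I_j(Δ)}. If M is an indecomposable module in I_∞(Δ), then there exists a characteristic module T ∈ I_0(Δ) with rad_Δ^∞(M, T) ≠ 0. -/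
open CategoryTheory

variable {A : Type} [Ring A]

section Hopkins
variable (R : Type) [CommRing R] [IsArtinianRing R]

lemma aux_ssRing : IsSemisimpleRing (R ⧸ Ideal.jacobson (⊥ : Ideal R)) := by
  have h1 : Ideal.jacobson (⊥ : Ideal R) = Ideal.radical ⊥ := by
    refine le_antisymm ?_ Ideal.radical_le_jacobson
    obtain ⟨n, hn⟩ := IsArtinianRing.isNilpotent_jacobson_bot (R := R)
    intro x hx
    have : x ^ n ∈ (Ideal.jacobson (⊥ : Ideal R)) ^ n := Ideal.pow_mem_pow hx n
    rw [hn] at this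
    exact ⟨n, this⟩
  have : IsReduced (R ⧸ Ideal.jacobson (⊥ : Ideal R)) := by
    rw [← Ideal.isRadical_iff_quotient_reduced, h1]
    exact Ideal.radical_isRadical _
  exact IsArtinianRing.isSemisimpleRing_of_isReduced _

lemma aux_ss_of_smul {X : Type} [AddCommGroup X] [Module R X]
    (h : Ideal.jacobson (⊥ : Ideal R) • (⊤ : Submodule R X) = ⊥) :
    IsSemisimpleModule R X := by
  set J := Ideal.jacobson (⊥ : Ideal R) with hJ
  have ht : Module.IsTorsionBySet R X (J : Set R) := by
    intro x r
    have : (r : R) • x ∈ J • (⊤ : Submodule R X) :=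
      Submodule.smul_mem_smul r.2 Submodule.mem_top
    rw [h] at this
    exact this
  letI : Module (R ⧸ J) X := ht.module
  haveI : IsSemisimpleRing (R ⧸ J) := aux_ssRing R
  have hbij : Function.Bijective (id : X → X) := Function.bijective_id
  let l : X →ₛₗ[Ideal.Quotient.mk J] X :=
    { toFun := id
      map_add' := fun _ _ => rfl
      map_smul' := fun r x => (ht.mk_smul r x).symm }
  exact (LinearMap.isSemisimpleModule_iff_of_bijective l hbij).mpr inferInstance

lemma aux_noeth_rec : ∀ (k : ℕ) (X : Type) [AddCommGroup X] [Module R X] [IsArtinian R X],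
    ((Ideal.jacobson (⊥ : Ideal R)) ^ k • (⊤ : Submodule R X) = ⊥) → IsNoetherian R X
  | 0, X, _, _, _, h => by
    rw [pow_zero, Ideal.one_eq_top, Submodule.top_smul] at h
    haveI : Subsingleton X := by
      constructor; intro a b
      have ha : a ∈ (⊥ : Submodule R X) := h ▸ Submodule.mem_top
      have hb : b ∈ (⊥ : Submodule R X) := h ▸ Submodule.mem_top
      simp only [Submodule.mem_bot] at ha hb; rw [ha, hb]
    haveI : Finite X := Finite.of_subsingleton
    exact isNoetherian_of_finite R X
  | (k+1), X, _, _, _, h => by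
    set J := Ideal.jacobson (⊥ : Ideal R) with hJdef
    set S : Submodule R X := J • ⊤ with hSdef
    have hS : (J ^ k) • (⊤ : Submodule R S) = ⊥ := by
      apply Submodule.map_injective_of_injective S.injective_subtype
      rw [Submodule.map_smul'', Submodule.map_top, Submodule.range_subtype, Submodule.map_bot]
      rw [hSdef, ← Submodule.smul_assoc, Ideal.smul_eq_mul, ← pow_succ]
      exact h
    haveI hns : IsNoetherian R S := aux_noeth_rec k S hS
    have hq : J • (⊤ : Submodule R (X ⧸ S)) = ⊥ := by
      have hm := Submodule.map_smul'' J (⊤ : Submodule R X) S.mkQ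
      rw [Submodule.map_top, Submodule.range_mkQ] at hm
      rw [← hm]
      rw [← hSdef, eq_bot_iff]
      rintro x hx
      obtain ⟨y, hy, rfl⟩ := Submodule.mem_map.mp hx
      simpa using (Submodule.Quotient.mk_eq_zero S).mpr hy
    haveI := aux_ss_of_smul R hq
    haveI hnq : IsNoetherian R (X ⧸ S) := by
      have htf := (IsSemisimpleModule.finite_tfae (R := R) (M := X ⧸ S)).out 2 1
      exact htf.mp inferInstance
    exact (isNoetherian_iff_submodule_quotient S).mpr ⟨hns, hnq⟩

lemma aux_hopkins (X : Type) [AddCommGroup X] [Module R X] [IsArtinian R X] :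
    IsNoetherian R X := by
  obtain ⟨n, hn⟩ := IsArtinianRing.isNilpotent_jacobson_bot (R := R)
  exact aux_noeth_rec R n X (by rw [hn]; simp)
end Hopkins
section AuxBasic
variable {A : Type} [Ring A]

lemma aux_summand_trans {X D M : ModuleCat.{0} A} (h1 : Summand X D) (h2 : Summand D M) :
    Summand X M := by
  obtain ⟨i1, r1, h1⟩ := h1; obtain ⟨i2, r2, h2⟩ := h2
  refine ⟨i1 ≫ i2, r2 ≫ r1, ?_⟩
  rw [Category.assoc, ← Category.assoc i2, h2, Category.id_comp, h1]

lemma aux_summand_indec {D M : ModuleCat.{0} A} (hM : Indec M) (hD : ¬ Subsingleton D)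
    (h : Summand D M) : ∃ (i : D ⟶ M) (r : M ⟶ D), i ≫ r = 𝟙 D ∧ r ≫ i = 𝟙 M := by
  obtain ⟨i, r, hir⟩ := h
  have he : (r ≫ i) ≫ (r ≫ i) = r ≫ i := by
    rw [Category.assoc, ← Category.assoc i, hir, Category.id_comp]
  rcases hM.2 (r ≫ i) he with h0 | h1
  · exfalso; apply hD
    constructor; intro a b
    have hz : ∀ x : D, x = 0 := by
      intro x
      have h1 : ∀ y : M, i (r y) = 0 := by
        intro y
        have := ConcreteCategory.congr_hom h0 y
        exact this
      have h2 : r (i x) = x := ConcreteCategory.congr_hom hir x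
      have h3 : i x = 0 := by
        have := h1 (i x)
        rw [h2] at this; exact this
      rw [← h2, h3, map_zero]
    rw [hz a, hz b]
  · exact ⟨i, r, hir, h1⟩

lemma aux_inAdd_finite {C : Set (ModuleCat.{0} A)} (hC : ∀ Y ∈ C, Module.Finite A Y)
    {X : ModuleCat.{0} A} (h : InAdd C X) : Module.Finite A X := by
  induction h with
  | base hM => exact hC _ hM
  | prod h1 h2 ih1 ih2 =>
    haveI := ih1; haveI := ih2
    exact Module.Finite.prod
  | @summand D M hM hs ih =>
    haveI := ih
    obtain ⟨i, r, hir⟩ := hs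
    exact Module.Finite.of_surjective r.hom
      (fun d => ⟨i d, ConcreteCategory.congr_hom hir d⟩)

lemma aux_instances (R : Type) [CommRing R] [IsArtinianRing R] {A : Type} [Ring A]
    [Algebra R A] [Module.Finite R A] (X : ModuleCat.{0} A) (hX : Module.Finite A X) :
    IsArtinian A X ∧ IsNoetherian A X := by
  letI : Module R X := Module.compHom X (algebraMap R A)
  haveI : IsScalarTower R A X := ⟨fun r a x => by
    show (r • a) • x = (algebraMap R A r) • (a • x)
    rw [Algebra.smul_def, mul_smul]⟩
  haveI := hX
  haveI : Module.Finite R X := Module.Finite.trans A X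
  haveI : IsArtinian R X := isArtinian_of_fg_of_artinian'
  haveI : IsNoetherian R X := aux_hopkins R X
  exact ⟨isArtinian_of_tower R inferInstance, isNoetherian_of_tower R inferInstance⟩

end AuxBasic
section AuxFitting
variable {A : Type} [Ring A]

/-- view an endomorphism in `ModuleCat` as a linear endomorphism -/
def toEnd {X : ModuleCat.{0} A} (f : X ⟶ X) : X →ₗ[A] X := f.hom

/-- view a linear endomorphism as an endomorphism in `ModuleCat` -/
def ofEnd {X : ModuleCat.{0} A} (f : X →ₗ[A] X) : X ⟶ X := ModuleCat.ofHom f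

lemma aux_fitting {X : ModuleCat.{0} A} [IsArtinian A X] [IsNoetherian A X]
    (hX : Indec X) (f : X ⟶ X) :
    (∃ k : ℕ, toEnd f ^ (k+1) = 0) ∨
    (∃ g : X ⟶ X, f ≫ g = 𝟙 X ∧ g ≫ f = 𝟙 X) := by
  set f' : X →ₗ[A] X := toEnd f with hf'
  obtain ⟨n₀, hn₀⟩ := Filter.eventually_atTop.mp
    (LinearMap.eventually_isCompl_ker_pow_range_pow f')
  set n := n₀ + 1 with hn
  have hc : IsCompl (LinearMap.ker (f' ^ n)) (LinearMap.range (f' ^ n)) :=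
    hn₀ n (Nat.le_add_right _ _)
  set p := LinearMap.range (f' ^ n)
  set q := LinearMap.ker (f' ^ n)
  let e₀ : X →ₗ[A] p := Submodule.linearProjOfIsCompl p q hc.symm
  let e : X ⟶ X := ModuleCat.ofHom (p.subtype.comp e₀)
  have he_left : ∀ x ∈ p, e x = x := by
    intro x hx
    show (p.subtype (e₀ x) : X) = x
    rw [show e₀ x = ⟨x, hx⟩ from Submodule.linearProjOfIsCompl_apply_left hc.symm ⟨x, hx⟩]
    rfl
  have he_right : ∀ x ∈ q, e x = 0 := by
    intro x hx
    show (p.subtype (e₀ x) : X) = 0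
    rw [show e₀ x = 0 from Submodule.linearProjOfIsCompl_apply_right hc.symm ⟨x, hx⟩]
    rfl
  have hee : e ≫ e = e := by
    ext x
    show e (e x) = e x
    exact he_left _ (e₀ x).2
  rcases hX.2 e hee with h0 | h1
  · left
    refine ⟨n₀, ?_⟩
    ext x
    have hx : (f' ^ n) x ∈ p := LinearMap.mem_range_self _ x
    have h := he_left _ hx
    rw [h0] at h
    show (f' ^ n) x = 0
    exact h.symm.trans rfl
  · right
    have hinj : Function.Injective f' := by
      intro x y hxy
      have hker : x - y ∈ q := by
        have hfz : f' (x - y) = 0 := by rw [map_sub, hxy, sub_self]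
        show (f' ^ n) (x - y) = 0
        rw [hn, pow_succ]
        show (f' ^ n₀) (f' (x - y)) = 0
        rw [hfz, map_zero]
      have h := he_right _ hker
      rw [h1] at h
      have h2 : x - y = 0 := h
      exact sub_eq_zero.mp h2
    have hsurj : Function.Surjective f' := by
      intro y
      have hy : e y = y := by rw [h1]; rfl
      have hyp : y ∈ p := by rw [← hy]; exact (e₀ y).2
      obtain ⟨z, hz⟩ := hyp
      refine ⟨(f' ^ n₀) z, ?_⟩
      show (f' * f' ^ n₀) z = y
      rw [← pow_succ']
      exact hz
    let eqv := LinearEquiv.ofBijective f' ⟨hinj, hsurj⟩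
    refine ⟨ofEnd eqv.symm.toLinearMap, ?_, ?_⟩
    · ext x
      exact eqv.symm_apply_apply x
    · ext x
      exact eqv.apply_symm_apply x

lemma aux_unit_of_sum {X : ModuleCat.{0} A} [IsArtinian A X] [IsNoetherian A X]
    (hX : Indec X) (a b : X ⟶ X) (hab : a + b = 𝟙 X) :
    (∃ a' : X ⟶ X, a ≫ a' = 𝟙 X ∧ a' ≫ a = 𝟙 X) ∨
    (∃ b' : X ⟶ X, b ≫ b' = 𝟙 X ∧ b' ≫ b = 𝟙 X) := by
  rcases aux_fitting hX a with ⟨k, hk⟩ | ha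
  · right
    have hab' : toEnd a + toEnd b = 1 := congr_arg ModuleCat.Hom.hom hab
    have hb : toEnd b = 1 - toEnd a := by rw [← hab']; abel
    have hnil : IsNilpotent (toEnd a) := ⟨k + 1, hk⟩
    have hu : IsUnit (toEnd b) := by
      rw [hb]; exact hnil.isUnit_one_sub
    obtain ⟨u, hu⟩ := hu
    refine ⟨ofEnd ((u⁻¹ : (X →ₗ[A] X)ˣ) : X →ₗ[A] X), ?_, ?_⟩
    · apply ModuleCat.hom_ext
      show ((u⁻¹ : (X →ₗ[A] X)ˣ) : X →ₗ[A] X) * toEnd b = 1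
      rw [← hu]; exact u.inv_mul
    · apply ModuleCat.hom_ext
      show toEnd b * ((u⁻¹ : (X →ₗ[A] X)ˣ) : X →ₗ[A] X) = 1
      rw [← hu]; exact u.mul_inv
  · left; exact ha

lemma aux_summand_prod {X M N : ModuleCat.{0} A} [IsArtinian A X] [IsNoetherian A X]
    (hX : Indec X) (h : Summand X (ModuleCat.of A (M × N))) :
    Summand X M ∨ Summand X N := by
  obtain ⟨i, r, hir⟩ := h
  let π₁ : ModuleCat.of A (M × N) ⟶ M := ModuleCat.ofHom <| LinearMap.fst A M N
  let π₂ : ModuleCat.of A (M × N) ⟶ N := ModuleCat.ofHom <| LinearMap.snd A M N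
  let ι₁ : M ⟶ ModuleCat.of A (M × N) := ModuleCat.ofHom <| LinearMap.inl A M N
  let ι₂ : N ⟶ ModuleCat.of A (M × N) := ModuleCat.ofHom <| LinearMap.inr A M N
  have hab : (i ≫ π₁ ≫ ι₁ ≫ r) + (i ≫ π₂ ≫ ι₂ ≫ r) = 𝟙 X := by
    ext x
    show r (((i x).1, 0)) + r ((0, (i x).2)) = x
    rw [← map_add]
    have h2 : (((i x).1, (0 : N)) : M × N) + ((0 : M), (i x).2) = i x := by
      ext <;> simp
    rw [h2]
    exact ConcreteCategory.congr_hom hir x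
  rcases aux_unit_of_sum hX _ _ hab with ⟨a', ha1, _⟩ | ⟨b', hb1, _⟩
  · left
    refine ⟨i ≫ π₁, ι₁ ≫ r ≫ a', ?_⟩
    rw [← ha1]; simp only [Category.assoc]
  · right
    refine ⟨i ≫ π₂, ι₂ ≫ r ≫ b', ?_⟩
    rw [← hb1]; simp only [Category.assoc]

lemma aux_ks (R : Type) [CommRing R] [IsArtinianRing R] {A : Type} [Ring A]
    [Algebra R A] [Module.Finite R A] {S : Set (ModuleCat.{0} A)} {X Z : ModuleCat.{0} A}
    (hX : Indec X) (hXfin : Module.Finite A X) (hZ : InAdd S Z) (hs : Summand X Z) :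
    ∃ W ∈ S, Summand X W := by
  obtain ⟨hart, hnoe⟩ := aux_instances R X hXfin
  revert hs
  induction hZ with
  | base hM => exact fun hs => ⟨_, hM, hs⟩
  | prod h1 h2 ih1 ih2 =>
    intro hs
    rcases aux_summand_prod hX hs with h | h
    · exact ih1 h
    · exact ih2 h
  | summand hM hsum ih =>
    intro hs
    exact ih (aux_summand_trans hs hsum)

end AuxFitting
section AuxRad
variable {A : Type} [Ring A]

def toHom {M N : ModuleCat.{0} A} (f : (M : Type) →ₗ[A] (N : Type)) : M ⟶ N := ModuleCat.ofHom f

def unHom {M N : ModuleCat.{0} A} (f : M ⟶ N) : (M : Type) →ₗ[A] (N : Type) := f.hom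

lemma aux_relRad_postcomp {C : Set (ModuleCat.{0} A)} {L N P : ModuleCat.{0} A}
    {h : L ⟶ N} (hh : h ∈ relRad C L N) (k : N ⟶ P) : h ≫ k ∈ relRad C L P := by
  intro X hXa hXi g h'
  have := hh X hXa hXi g (k ≫ h')
  simpa only [Category.assoc] using this

lemma aux_radPow_comp_mem {C : Set (ModuleCat.{0} A)} {m : ℕ} {M L N : ModuleCat.{0} A}
    {g : M ⟶ L} {h : L ⟶ N} (hg : g ∈ radPow C m M L) (hh : h ∈ relRad C L N) :
    g ≫ h ∈ radPow C (m+1) M N :=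
  AddSubgroup.subset_closure ⟨L, g, h, hg, hh, rfl⟩

lemma aux_radPow_postcomp {C : Set (ModuleCat.{0} A)} :
    ∀ {m : ℕ} {M N P : ModuleCat.{0} A} {f : M ⟶ N}, f ∈ radPow C m M N →
      ∀ k : N ⟶ P, f ≫ k ∈ radPow C m M P := by
  intro m
  match m with
  | 0 => intro M N P f _ k; exact AddSubgroup.mem_top _
  | m+1 =>
    intro M N P f hf k
    refine AddSubgroup.closure_induction ?_ ?_ ?_ ?_ hf
    · rintro f ⟨L, g, h, hg, hh, rfl⟩
      have : (g ≫ h) ≫ k = g ≫ (h ≫ k) := Category.assoc _ _ _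
      rw [this]
      exact aux_radPow_comp_mem hg (aux_relRad_postcomp hh k)
    · have : (0 : M ⟶ N) ≫ k = 0 := by
        ext x; exact map_zero k.hom
      rw [this]; exact (radPow C (m+1) M P).zero_mem
    · intro f g _ _ hfk hgk
      have : (f + g) ≫ k = f ≫ k + g ≫ k := by
        ext x; exact map_add k.hom _ _
      rw [this]; exact (radPow C (m+1) M P).add_mem hfk hgk
    · intro f _ hfk
      have : (-f) ≫ k = -(f ≫ k) := by
        ext x; exact map_neg k.hom _
      rw [this]; exact (radPow C (m+1) M P).neg_mem hfk

lemma aux_radPow_succ_le {C : Set (ModuleCat.{0} A)} {m : ℕ} {M N : ModuleCat.{0} A} :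
    radPow C (m+1) M N ≤ radPow C m M N := by
  refine (AddSubgroup.closure_le _).mpr ?_
  rintro f ⟨L, g, h, hg, hh, rfl⟩
  exact aux_radPow_postcomp hg h

lemma aux_radPow_antitone {C : Set (ModuleCat.{0} A)} {M N : ModuleCat.{0} A}
    {m m' : ℕ} (h : m ≤ m') : radPow C m' M N ≤ radPow C m M N := by
  induction h with
  | refl => exact le_rfl
  | step _ ih => exact le_trans aux_radPow_succ_le ih

lemma aux_iRest_le {C : Set (ModuleCat.{0} A)} (k : ℕ) :
    iRest C (k+1) ⊆ iRest C k := fun _ h => h.1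

lemma aux_iRest_le_zero {C : Set (ModuleCat.{0} A)} (k : ℕ) :
    iRest C k ⊆ C := by
  induction k with
  | zero => exact fun _ h => h
  | succ k ih => exact fun M h => ih (aux_iRest_le k h)

lemma aux_levelmap_relRad (R : Type) [CommRing R] [IsArtinianRing R] {A : Type} [Ring A]
    [Algebra R A] [Module.Finite R A] {C : Set (ModuleCat.{0} A)}
    (hCfin : ∀ Y ∈ C, Module.Finite A Y)
    {j : ℕ} {Z Z' : ModuleCat.{0} A} (hZ : InAdd (Ipart C (j+1)) Z)
    (hZ' : InAdd (Ipart C j) Z') (f : Z ⟶ Z') : f ∈ relRad C Z Z' := by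
  intro X hXa hXi g h hiso
  have hXfin : Module.Finite A X := aux_inAdd_finite hCfin hXa
  have hsum1 : Summand X Z := by
    refine ⟨g, f ≫ h ≫ CategoryTheory.inv (g ≫ f ≫ h), ?_⟩
    simp only [← Category.assoc]
    simpa only [Category.assoc] using IsIso.hom_inv_id (g ≫ f ≫ h)
  have hsum2 : Summand X Z' := by
    refine ⟨CategoryTheory.inv (g ≫ f ≫ h) ≫ g ≫ f, h, ?_⟩
    simpa only [Category.assoc] using IsIso.inv_hom_id (g ≫ f ≫ h)
  obtain ⟨W, hW, hXW⟩ := aux_ks R hXi hXfin hZ hsum1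
  obtain ⟨D, hD, hXD⟩ := aux_ks R hXi hXfin hZ' hsum2
  obtain ⟨i, r, hir, hri⟩ := aux_summand_indec hD.2.1 hXi.1 hXD
  obtain ⟨iW, rW, hiW⟩ := hXW
  have hDW : Summand D W := by
    refine ⟨r ≫ iW, rW ≫ i, ?_⟩
    rw [show (r ≫ iW) ≫ rW ≫ i = r ≫ (iW ≫ rW) ≫ i by simp only [Category.assoc]]
    rw [hiW, Category.id_comp, hri]
  exact hW.1.2 D hD hDW

lemma aux_step {C : Set (ModuleCat.{0} A)} {j : ℕ}
    (hcov : IsCocover (Ipart C j) (iRest C j)) {Z : ModuleCat.{0} A}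
    (hZ : InAdd (Ipart C (j+1)) Z) :
    ∃ Z' : ModuleCat.{0} A, InAdd (Ipart C j) Z' ∧ ∃ f : Z ⟶ Z', Mono f := by
  induction hZ with
  | base hW =>
    obtain ⟨Y, hY, f, hf⟩ := hcov _ hW.1.1
    exact ⟨Y, hY, f, hf⟩
  | prod h1 h2 ih1 ih2 =>
    obtain ⟨Z1, hZ1, f1, hf1⟩ := ih1
    obtain ⟨Z2, hZ2, f2, hf2⟩ := ih2
    refine ⟨ModuleCat.of A (Z1 × Z2), InAdd.prod hZ1 hZ2,
      toHom (LinearMap.prodMap f1.hom f2.hom), ?_⟩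
    rw [ModuleCat.mono_iff_injective] at hf1 hf2 ⊢
    intro x y hxy
    have h1 : f1 x.1 = f1 y.1 := congrArg Prod.fst hxy
    have h2 : f2 x.2 = f2 y.2 := congrArg Prod.snd hxy
    exact Prod.ext (hf1 h1) (hf2 h2)
  | summand hM hsum ih =>
    obtain ⟨Z', hZ', f, hf⟩ := ih
    obtain ⟨i, r, hir⟩ := hsum
    refine ⟨Z', hZ', i ≫ f, ?_⟩
    rw [ModuleCat.mono_iff_injective] at hf ⊢
    intro x y hxy
    have h2 : r (i x) = r (i y) := congrArg r (hf hxy)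
    exact (ConcreteCategory.congr_hom hir x).symm.trans
      ((id h2 : (i ≫ r) x = (i ≫ r) y).trans (ConcreteCategory.congr_hom hir y))

end AuxRad
section AuxFinal
variable {A : Type} [Ring A]

lemma aux_M_iRest {C : Set (ModuleCat.{0} A)} {M : ModuleCat.{0} A}
    (hMC : M ∈ C) (hind : Indec M) (hnot : ∀ k, M ∉ Ipart C k) : ∀ k, M ∈ iRest C k := by
  intro k; induction k with
  | zero => exact hMC
  | succ k ih =>
    refine ⟨ih, ?_⟩
    intro D hD hsum
    have hDind : Indec D := hD.2.1
    obtain ⟨i, r, hir, hri⟩ := aux_summand_indec hind hDind.1 hsum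
    apply hnot k
    refine ⟨ih, hind, ?_⟩
    intro Y hY f hf
    have hif : Mono (i ≫ f) := by
      rw [ModuleCat.mono_iff_injective] at hf ⊢
      intro x y hxy
      have h2 : f (i x) = f (i y) := hxy
      have h3 : i x = i y := hf h2
      have h4 : r (i x) = r (i y) := congrArg r h3
      exact (ConcreteCategory.congr_hom hir x).symm.trans
        ((id h4 : (i ≫ r) x = (i ≫ r) y).trans (ConcreteCategory.congr_hom hir y))
    obtain ⟨r', hr'⟩ := hD.2.2 Y hY (i ≫ f) hif
    refine ⟨r' ≫ i, ?_⟩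
    calc f ≫ r' ≫ i = (r ≫ i) ≫ f ≫ r' ≫ i := by rw [hri, Category.id_comp]
    _ = r ≫ ((i ≫ f) ≫ r') ≫ i := by simp only [Category.assoc]
    _ = 𝟙 M := by rw [hr', Category.id_comp, hri]

lemma aux_extract {S : Set (ModuleCat.{0} A)} {M : ModuleCat.{0} A}
    {Z : ModuleCat.{0} A} (hZ : InAdd S Z) :
    ∀ c : M ⟶ Z, c ≠ 0 → ∃ T' ∈ S, ∃ p : Z ⟶ T', c ≫ p ≠ 0 := by
  induction hZ with
  | base h => exact fun c hc => ⟨_, h, 𝟙 _, by rwa [Category.comp_id]⟩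
  | @prod Z1 Z2 h1 h2 ih1 ih2 =>
    intro c hc
    by_cases h : c ≫ (toHom (LinearMap.fst A Z1 Z2)) = 0
    · have hs : c ≫ toHom (LinearMap.snd A Z1 Z2) ≠ 0 := by
        intro h2
        apply hc; apply ModuleCat.hom_ext; apply LinearMap.ext; intro x
        have e1 : (c x).1 = 0 := ConcreteCategory.congr_hom h x
        have e2 : (c x).2 = 0 := ConcreteCategory.congr_hom h2 x
        show c x = 0
        exact Prod.ext e1 e2
      obtain ⟨T', hT', p, hp⟩ := ih2 _ hs
      exact ⟨T', hT', toHom (LinearMap.snd A Z1 Z2) ≫ p, by rwa [← Category.assoc]⟩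
    · obtain ⟨T', hT', p, hp⟩ := ih1 _ h
      exact ⟨T', hT', toHom (LinearMap.fst A Z1 Z2) ≫ p, by rwa [← Category.assoc]⟩
  | @summand D Z' hZ' hsum ih =>
    intro c hc
    obtain ⟨i, r, hir⟩ := hsum
    have hci : c ≫ i ≠ 0 := by
      intro h
      apply hc
      have h2 : (c ≫ i) ≫ r = (0 : M ⟶ Z') ≫ r := by rw [h]
      rw [Category.assoc, hir, Category.comp_id] at h2
      rw [h2]
      ext x
      show r ((0 : M ⟶ Z') x) = (0 : M ⟶ D) x
      show r 0 = 0
      exact map_zero r.hom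
    obtain ⟨T', hT', p, hp⟩ := ih _ hci
    exact ⟨T', hT', i ≫ p, by rwa [← Category.assoc]⟩

lemma aux_stab (R : Type) [CommRing R] [IsArtinianRing R] {A : Type} [Ring A]
    [Algebra R A] [Module.Finite R A] (C : Set (ModuleCat.{0} A)) (M N : ModuleCat.{0} A)
    (hMfin : Module.Finite A M) (hNfin : Module.Finite A N)
    (hne : ∀ m : ℕ, ∃ f ∈ radPow C m M N, f ≠ 0) :
    ∃ f : M ⟶ N, (∀ m, f ∈ radPow C m M N) ∧ f ≠ 0 := by
  letI : Module R N := Module.compHom N (algebraMap R A)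
  haveI : IsScalarTower R A N := ⟨fun r a x => by
    show (r • a) • x = (algebraMap R A r) • (a • x)
    rw [Algebra.smul_def, mul_smul]⟩
  haveI : SMulCommClass A R N := ⟨fun a r x => by
    show a • ((algebraMap R A r) • x) = (algebraMap R A r) • (a • x)
    rw [← mul_smul, ← mul_smul, Algebra.commutes]⟩
  haveI := hNfin
  haveI : Module.Finite R N := Module.Finite.trans A N
  haveI : IsArtinian R N := isArtinian_of_fg_of_artinian'
  haveI := hMfin
  obtain ⟨kgen, gen, hgen⟩ := Module.Finite.exists_fin (R := A) (M := M)
  let ψ : (M →ₗ[A] N) →ₗ[R] (Fin kgen → N) :=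
    { toFun := fun f => fun j => f (gen j)
      map_add' := fun f g => rfl
      map_smul' := fun r f => rfl }
  have hψ : Function.Injective ψ := by
    intro f g hfg
    apply LinearMap.ext; intro x
    have hx : x ∈ Submodule.span A (Set.range gen) := hgen ▸ Submodule.mem_top
    refine Submodule.span_induction ?_ ?_ ?_ ?_ hx
    · rintro _ ⟨j, rfl⟩
      exact congrFun hfg j
    · rw [map_zero, map_zero]
    · intro y z _ _ hy hz
      rw [map_add, map_add, hy, hz]
    · intro a y _ hy
      rw [map_smul, map_smul, hy]
  haveI : IsArtinian R (M →ₗ[A] N) := isArtinian_of_injective ψ hψ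
  have hsmul : ∀ (r : R) (f' : (M : Type) →ₗ[A] (N : Type)) (m : ℕ),
      toHom f' ∈ radPow C m M N → toHom (r • f') ∈ radPow C m M N := by
    intro r f' m hf
    let φ : N ⟶ N := toHom
      { toFun := fun x => (algebraMap R A r) • x
        map_add' := fun x y => smul_add _ _ _
        map_smul' := fun a x => by
          show (algebraMap R A r) • (a • x) = a • ((algebraMap R A r) • x)
          rw [← mul_smul, ← mul_smul, Algebra.commutes] }
    have heq : toHom (r • f') = toHom f' ≫ φ := by
      ext x
      show r • (f' x) = (algebraMap R A r) • (f' x)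
      rfl
    rw [heq]
    exact aux_radPow_postcomp hf φ
  let Q : ℕ →o (Submodule R (M →ₗ[A] N))ᵒᵈ :=
    { toFun := fun m =>
        { carrier := {g : (M : Type) →ₗ[A] (N : Type) | toHom g ∈ radPow C m M N}
          add_mem' := fun ha hb => (radPow C m M N).add_mem ha hb
          zero_mem' := (radPow C m M N).zero_mem
          smul_mem' := fun r g hg => hsmul r g m hg }
      monotone' := fun m m' h g hg => aux_radPow_antitone h hg }
  obtain ⟨m₀, hm₀⟩ := IsArtinian.monotone_stabilizes Q
  obtain ⟨f, hf, hf0⟩ := hne m₀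
  refine ⟨f, ?_, hf0⟩
  intro m
  rcases le_or_gt m m₀ with h | h
  · exact aux_radPow_antitone h hf
  · have h1 : unHom f ∈ OrderDual.ofDual (Q m₀) := hf
    rw [hm₀ m h.le] at h1
    exact h1

end AuxFinal
/-- if M is indecomposable in I_∞(Δ), then there is a characteristic module
T ∈ I₀(Δ) with rad_Δ^∞(M,T) ≠ 0. -/
theorem stmt8 {R : Type} [CommRing R] [IsArtinianRing R] {A : Type} [Ring A]
    [Algebra R A] [Module.Finite R A] {n : ℕ} (Δ T : Fin n → ModuleCat.{0} A)
    (hT : ∀ i, T i ∈ Ipart (FDelta Δ) 0)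
    (hI0 : ∀ X ∈ Ipart (FDelta Δ) 0, ∃ i, Nonempty (X ≅ T i))
    (hcocovers : ∀ k : ℕ, IsCocover (Ipart (FDelta Δ) k) (iRest (FDelta Δ) k))
    (M : ModuleCat.{0} A) (hM : M ∈ Iinf (FDelta Δ)) (hind : Indec M) :
    ∃ T' ∈ Ipart (FDelta Δ) 0, ∃ f : M ⟶ T', f ∈ radInf (FDelta Δ) M T' ∧ f ≠ 0 := by
  obtain ⟨hMC, hMind, hMnot⟩ := hM
  set C := FDelta Δ with hCdef
  have hCfin : ∀ Y ∈ C, Module.Finite A Y := fun Y hY => hY.1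
  have hMk : ∀ k, M ∈ iRest C k := aux_M_iRest hMC hind hMnot
  have hchain : ∀ t j : ℕ, ∃ Z, InAdd (Ipart C j) Z ∧
      ∃ f : M ⟶ Z, Mono f ∧ f ∈ radPow C t M Z := by
    intro t
    induction t with
    | zero =>
      intro j
      obtain ⟨Z, hZ, f, hf⟩ := hcocovers j M (hMk j)
      exact ⟨Z, hZ, f, hf, AddSubgroup.mem_top _⟩
    | succ t ih =>
      intro j
      obtain ⟨Z1, hZ1, f1, hf1m, hf1r⟩ := ih (j+1)
      obtain ⟨Z2, hZ2, g, hg⟩ := aux_step (hcocovers j) hZ1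
      have hgr : g ∈ relRad C Z1 Z2 := aux_levelmap_relRad R hCfin hZ1 hZ2 g
      haveI := hf1m; haveI := hg
      exact ⟨Z2, hZ2, f1 ≫ g, mono_comp _ _, aux_radPow_comp_mem hf1r hgr⟩
  have hMnontriv : ∃ x : M, x ≠ 0 := by
    have : Nontrivial M := not_subsingleton_iff_nontrivial.mp hind.1
    exact exists_ne 0
  have hper : ∀ m : ℕ, ∃ i : Fin n, ∃ f : M ⟶ T i, f ∈ radPow C m M (T i) ∧ f ≠ 0 := by
    intro m
    obtain ⟨Z, hZ, f, hfm, hfr⟩ := hchain m 0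
    have hf0 : f ≠ 0 := by
      obtain ⟨x, hx⟩ := hMnontriv
      intro h
      rw [ModuleCat.mono_iff_injective] at hfm
      apply hx
      apply hfm
      rw [h]
      show (0 : M → Z) x = (0 : M ⟶ Z) 0
      show (0 : Z) = (0 : Z)
      rfl
    obtain ⟨T', hT', p, hp⟩ := aux_extract hZ f hf0
    obtain ⟨i, ⟨e⟩⟩ := hI0 T' hT'
    refine ⟨i, (f ≫ p) ≫ e.hom,
      aux_radPow_postcomp (aux_radPow_postcomp hfr p) e.hom, ?_⟩
    intro h
    apply hp
    have h2 : ((f ≫ p) ≫ e.hom) ≫ e.inv = (0 : M ⟶ T i) ≫ e.inv := by rw [h]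
    rw [Category.assoc, e.hom_inv_id, Category.comp_id] at h2
    rw [h2]
    ext x
    show e.inv ((0 : M ⟶ T i) x) = (0 : M ⟶ T') x
    show e.inv 0 = 0
    exact map_zero e.inv.hom
  have hpig : ∃ i : Fin n, ∀ m, ∃ f ∈ radPow C m M (T i), f ≠ 0 := by
    by_contra hcon
    push_neg at hcon
    choose mm hmm using hcon
    obtain ⟨i, f, hf, hf0⟩ := hper (Finset.univ.sup mm)
    exact hf0 (hmm i f (aux_radPow_antitone (Finset.le_sup (Finset.mem_univ i)) hf))
  obtain ⟨i, hi⟩ := hpig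
  have hTfin : Module.Finite A (T i) := hCfin _ (hT i).1
  obtain ⟨f, hfall, hf0⟩ := aux_stab R C M (T i) (hCfin _ hMC) hTfin hi
  refine ⟨T i, hT i, f, ?_, hf0⟩
  show f ∈ ⨅ n : ℕ, radPow C (n+1) M (T i)
  rw [AddSubgroup.mem_iInf]
  intro k
  exact hfall (k+1)
end

section
/- Let A be a quasi-hereditary algebra and ℱ(Δ) the category of Δ-good modules. If ℱ(Δ) is infinite (contains infinitely many indecomposables up to isomorphism), then there exists an index i with Δ(i) ∈ P_∞(Δ), i.e., some standard module is not postprojective in ℱ(Δ). -/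
open CategoryTheory

variable {A : Type} [Ring A]

section Aux
variable {A : Type} [Ring A]

lemma pRest_antitone (C : Set (ModuleCat.{0} A)) {k l : ℕ} (h : k ≤ l) :
    pRest C l ⊆ pRest C k := by
  induction l with
  | zero => simpa using (Nat.le_zero.mp h) ▸ subset_rfl
  | succ l ih =>
    rcases Nat.le_succ_iff_eq_or_le.mp h with rfl | h'
    · exact subset_rfl
    · exact fun M hM => ih h' hM.1

lemma exists_surj_to_delta {n : ℕ} (Δ : Fin n → ModuleCat.{0} A) {M : ModuleCat.{0} A}
    (hM : HasDeltaFiltration Δ M) (hns : ¬ Subsingleton M) :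
    ∃ (j : Fin n) (f : M ⟶ Δ j), Function.Surjective f := by
  obtain ⟨s, c, hmono, hbot, htop, hstep⟩ := hM
  cases s with
  | zero =>
    exfalso
    apply hns
    have hbt : (⊥ : Submodule A M) = ⊤ := by rw [← hbot, ← htop]; rfl
    refine subsingleton_of_forall_eq 0 fun x => ?_
    have : x ∈ (⊥ : Submodule A M) := by rw [hbt]; trivial
    simpa using this
  | succ t =>
    set i : Fin (t+1) := Fin.last t with hi
    obtain ⟨j, ⟨e⟩⟩ := hstep i
    have hct : c i.succ = ⊤ := by rw [hi, Fin.succ_last]; exact htop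
    set N := Submodule.comap (c i.succ).subtype (c i.castSucc)
    refine ⟨j, ModuleCat.ofHom (e.toLinearMap ∘ₗ N.mkQ ∘ₗ (LinearEquiv.ofEq ⊤ (c i.succ) hct.symm).toLinearMap
      ∘ₗ Submodule.topEquiv.symm.toLinearMap), ?_⟩
    exact e.surjective.comp ((Submodule.mkQ_surjective N).comp
      (((LinearEquiv.ofEq ⊤ (c i.succ) hct.symm).surjective).comp
        Submodule.topEquiv.symm.surjective))

lemma delta_mem_FDelta {n : ℕ} (Δ : Fin n → ModuleCat.{0} A) (j : Fin n)
    (hfin : Module.Finite A (Δ j)) : Δ j ∈ FDelta Δ := by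
  refine ⟨hfin, 1, ![⊥, ⊤], ?_, rfl, rfl, ?_⟩
  · intro a b hab
    fin_cases a <;> fin_cases b <;> simp_all
  · intro i
    refine ⟨j, ⟨?_⟩⟩
    have h0 : i = 0 := Subsingleton.elim _ _
    subst h0
    have h1 : Submodule.comap ((![⊥, ⊤] : Fin 2 → Submodule A (Δ j)) (0:Fin 1).succ).subtype
        ((![⊥, ⊤] : Fin 2 → Submodule A (Δ j)) (0:Fin 1).castSucc) = ⊥ := by
      show Submodule.comap (⊤ : Submodule A (Δ j)).subtype ⊥ = ⊥
      simp [Submodule.comap_bot, Submodule.ker_subtype]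
    exact (Submodule.quotEquivOfEqBot _ h1).trans Submodule.topEquiv

lemma summand_iso_of_indec {D M : ModuleCat.{0} A} (hM : Indec M) (hD : Indec D)
    (h : Summand D M) : Nonempty (M ≅ D) := by
  obtain ⟨i, r, hir⟩ := h
  have he : (r ≫ i) ≫ (r ≫ i) = r ≫ i := by
    rw [Category.assoc, ← Category.assoc i r i, hir, Category.id_comp]
  rcases hM.2 (r ≫ i) he with h0 | h1
  · exfalso
    apply hD.1
    have : (𝟙 D : D ⟶ D) = 0 := by
      calc (𝟙 D : D ⟶ D) = (i ≫ r) ≫ (i ≫ r) := by rw [hir, Category.id_comp]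
        _ = i ≫ (r ≫ i) ≫ r := by simp [Category.assoc]
        _ = 0 := by rw [h0]; simp
    refine subsingleton_of_forall_eq 0 fun x => ?_
    have := congrArg (fun f : D ⟶ D => f x) this
    simpa using this
  · exact ⟨⟨r, i, h1, hir⟩⟩

lemma exists_drop {C : Set (ModuleCat.{0} A)} {M : ModuleCat.{0} A} (h0 : M ∈ C) :
    ∀ t : ℕ, M ∉ pRest C (t+1) → ∃ k ≤ t, M ∈ pRest C k ∧ M ∉ pRest C (k+1) := by
  intro t
  induction t with
  | zero => exact fun h => ⟨0, le_rfl, h0, h⟩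
  | succ t ih =>
    intro h
    by_cases hmem : M ∈ pRest C (t+1)
    · exact ⟨t+1, le_rfl, hmem, h⟩
    · obtain ⟨k, hk, h1, h2⟩ := ih hmem
      exact ⟨k, hk.trans (Nat.le_succ t), h1, h2⟩

end Aux

/-- if ℱ(Δ) is infinite then some standard module Δ(i) lies in P_∞(Δ). -/
theorem stmt10 {R : Type} [CommRing R] [IsArtinianRing R] {A : Type} [Ring A]
    [Algebra R A] [Module.Finite R A] {n : ℕ} (Δ : Fin n → ModuleCat.{0} A)
    (hΔind : ∀ i, Indec (Δ i))
    (hcov : CovariantlyFinite (FDelta Δ))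
    (hcovers : ∀ m : ℕ, IsCover (Ppart (FDelta Δ) m) (pRest (FDelta Δ) m))
    (hfinlev : ∀ m : ℕ, FinRep (Ppart (FDelta Δ) m))
    (hinf : ¬ FinRep {M | M ∈ FDelta Δ ∧ Indec M}) :
    ∃ i, Δ i ∈ Pinf (FDelta Δ) := by
  by_contra hcon
  push_neg at hcon
  -- each standard module in FDelta lies in some Ppart
  have hK : ∀ j : Fin n, Δ j ∈ FDelta Δ → ∃ k, Δ j ∈ Ppart (FDelta Δ) k := by
    intro j hj
    have := hcon j
    simp only [Pinf, Set.mem_setOf_eq, not_and, not_forall, not_not] at this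
    exact this hj (hΔind j)
  classical
  let K : Fin n → ℕ := fun j => if h : ∃ k, Δ j ∈ Ppart (FDelta Δ) k then h.choose else 0
  let m : ℕ := Finset.univ.sup K
  have hKm : ∀ j, K j ≤ m := fun j => Finset.le_sup (Finset.mem_univ j)
  have hKmem : ∀ j : Fin n, Δ j ∈ FDelta Δ → Δ j ∈ Ppart (FDelta Δ) (K j) := by
    intro j hj
    have h := hK j hj
    simp only [K, dif_pos h]
    exact h.choose_spec
  -- everything in pRest (m+1) is subsingleton
  have htail : ∀ M ∈ pRest (FDelta Δ) (m+1), Subsingleton M := by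
    intro M hM
    by_contra hns
    have hMF : M ∈ FDelta Δ := pRest_antitone (FDelta Δ) (Nat.zero_le _) hM
    obtain ⟨j, f, hf⟩ := exists_surj_to_delta Δ hMF.2 hns
    haveI : Module.Finite A M := hMF.1
    have hjfin : Module.Finite A (Δ j) := Module.Finite.of_surjective f.hom hf
    have hjP : Δ j ∈ Ppart (FDelta Δ) (K j) := hKmem j (delta_mem_FDelta Δ j hjfin)
    obtain ⟨hjC, hjI, hjS⟩ := hjP
    have hMrest : M ∈ pRest (FDelta Δ) (K j) :=
      pRest_antitone (FDelta Δ) ((hKm j).trans (Nat.le_succ m)) hM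
    have hepi : Epi f := (ModuleCat.epi_iff_surjective f).mpr hf
    obtain ⟨s, hs⟩ := hjS M (InAdd.base hMrest) f hepi
    have hMrest' : M ∈ pRest (FDelta Δ) (K j + 1) :=
      pRest_antitone (FDelta Δ) (Nat.succ_le_succ (hKm j)) hM
    exact hMrest'.2 (Δ j) ⟨hjC, hjI, hjS⟩ ⟨s, f, hs⟩
  -- each indecomposable in FDelta is iso to something in some Ppart k, k ≤ m
  have hdesc : ∀ M : ModuleCat.{0} A, M ∈ FDelta Δ → Indec M →
      ∃ k ≤ m, ∃ D ∈ Ppart (FDelta Δ) k, Nonempty (M ≅ D) := by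
    intro M hMF hMi
    have hMnot : M ∉ pRest (FDelta Δ) (m+1) := fun h => hMi.1 (htail M h)
    obtain ⟨k, hkm, h1, h2⟩ := exists_drop hMF (m+1 - 1) (by simpa using hMnot)
    simp only [pRest, Set.mem_setOf_eq, not_and, not_forall, not_not] at h2
    obtain ⟨D, hD, hDs⟩ := h2 h1
    exact ⟨k, by omega, D, hD, summand_iso_of_indec hMi hD.2.1 hDs⟩
  -- build a finite representative family, contradicting hinf
  choose ι inst rep hrep using hfinlev
  apply hinf
  refine ⟨(k : Fin (m+1)) × ι k.val, ?_, fun p => rep p.1.val p.2, ?_⟩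
  · haveI := inst; infer_instance
  · rintro M ⟨hMF, hMi⟩
    obtain ⟨k, hkm, D, hD, ⟨iso⟩⟩ := hdesc M hMF hMi
    obtain ⟨i, ⟨iso2⟩⟩ := hrep k D hD
    exact ⟨⟨⟨k, Nat.lt_succ_of_le hkm⟩, i⟩, ⟨iso.trans iso2⟩⟩
end
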